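/- Let R be a commutative ring, n : ℕ, and x ∈ R. Then det H_n(x, 0) = x^{n+1}; in particular, the coefficients of x^{n+1} and y^{n+1} in the homogeneous polynomial det H_n(x,y) are both equal to 1. -/

import Mathlib

open Matrix

/-- Vertices of the graphene triangle with rows `0, …, n`: row `m` has `2m+1` atoms. -/
abbrev TriIdx (n : ℕ) := (m : Fin (n+1)) × Fin (2*m.val+1)

/-- The Hückel matrix of the graphene triangle, with row-dependent boundary parameters
`x m`, `y m`. -/
def Huckel (R : Type*) [CommRing R] (n : ℕ) (x y : Fin (n+1) → R) :
    Matrix (TriIdx n) (TriIdx n) R :=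
  Matrix.of fun p q =>
    if p.1 = q.1 ∧ (p.2.val + 1 = q.2.val ∨ q.2.val + 1 = p.2.val) then 1
    else if p.1.val + 1 = q.1.val ∧ Even p.2.val ∧ q.2.val = p.2.val + 1 then 1
    else if q.1.val + 1 = p.1.val ∧ Even q.2.val ∧ p.2.val = q.2.val + 1 then 1
    else if 1 ≤ p.1.val ∧ p.1 = q.1 ∧ p.2.val = 0 ∧ q.2.val = 2*p.1.val then y p.1
    else if 1 ≤ p.1.val ∧ p.1 = q.1 ∧ p.2.val = 2*p.1.val ∧ q.2.val = 0 then x p.1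
    else if p.1.val = 0 ∧ q.1.val = 0 then x p.1 + y p.1
    else 0

/-- A matrix that is "triangular" with respect to some (linearly ordered) weight function
has determinant equal to the product of its diagonal entries. -/
lemma tri_det_eq_prod_diag {ι κ : Type*} [DecidableEq ι] [Fintype ι] [LinearOrder κ]
    {R : Type*} [CommRing R] (M : Matrix ι ι R) (f : ι → κ)
    (h : ∀ i j, i ≠ j → f i ≤ f j → M i j = 0) :
    M.det = ∏ i, M i i := by
  rw [Matrix.det_apply]
  rw [Finset.sum_eq_single (1 : Equiv.Perm ι)]
  · simp
  · intro σ _ hσ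
    have hne : (Finset.univ.filter fun i => σ i ≠ i).Nonempty := by
      rcases Finset.eq_empty_or_nonempty (Finset.univ.filter fun i => σ i ≠ i) with he | hne
      · exact absurd (Equiv.ext fun i => by
          by_contra hc
          exact (Finset.eq_empty_iff_forall_notMem.mp he i)
            (Finset.mem_filter.mpr ⟨Finset.mem_univ _, hc⟩)) hσ
      · exact hne
    obtain ⟨j, hj, hmax⟩ := Finset.exists_max_image _ f hne
    have hsj : σ j ≠ j := (Finset.mem_filter.mp hj).2
    have hsjj : σ (σ j) ≠ σ j := fun hc => hsj (σ.injective hc)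
    have hle : f (σ j) ≤ f j :=
      hmax (σ j) (Finset.mem_filter.mpr ⟨Finset.mem_univ _, hsjj⟩)
    rw [show (∏ i, M (σ i) i) = 0 from
      Finset.prod_eq_zero (Finset.mem_univ j) (h _ _ hsj hle), smul_zero]
  · simp

open Fin.NatCast Fin.CommRing in
lemma finRotate_pow_apply (k t : ℕ) (i : Fin (k+1)) :
    ((finRotate (k+1)) ^ t) i = i + (t : Fin (k+1)) := by
  induction t with
  | zero => simp
  | succ t ih =>
    rw [pow_succ', Equiv.Perm.mul_apply, ih, finRotate_succ_apply]
    push_cast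
    ring

lemma finRotate_pow_self (k : ℕ) : (finRotate (k+1)) ^ (k+1) = 1 :=
  Equiv.ext fun i => by rw [finRotate_pow_apply]; simp

/-- The simultaneous rotation of all rows of the triangle is an even permutation. -/
lemma sign_rot (n : ℕ) :
    Equiv.Perm.sign
      (Equiv.sigmaCongrRight (fun m : Fin (n+1) => finRotate (2*m.val+1)) :
        Equiv.Perm (TriIdx n)) = 1 := by
  have hτ : (Equiv.sigmaCongrRight (fun m : Fin (n+1) => finRotate (2*m.val+1)) :
        Equiv.Perm (TriIdx n))
      = (Equiv.sigmaCongrRight fun m : Fin (n+1) => (finRotate (2*m.val+1)) ^ (m.val+1)) *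
        (Equiv.sigmaCongrRight fun m : Fin (n+1) => (finRotate (2*m.val+1)) ^ (m.val+1)) := by
    rw [Equiv.Perm.sigmaCongrRight_mul]
    congr 1
    funext m
    show finRotate (2*m.val+1) =
      (finRotate (2*m.val+1)) ^ (m.val+1) * (finRotate (2*m.val+1)) ^ (m.val+1)
    rw [← pow_add]
    have h2 : m.val + 1 + (m.val + 1) = (2*m.val+1) + 1 := by ring
    rw [h2, pow_succ, finRotate_pow_self, one_mul]
  rw [hτ, _root_.map_mul, Int.units_mul_self]

/-- Exchanging the two boundary parameters transposes the Hückel matrix. -/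
lemma huckel_tr (R : Type*) [CommRing R] (n : ℕ) (x : R) :
    Huckel R n (fun _ => 0) (fun _ => x) = (Huckel R n (fun _ => x) (fun _ => 0))ᵀ := by
  ext p q
  obtain ⟨m, j⟩ := p
  obtain ⟨m', j'⟩ := q
  have hjb := j.isLt
  have hj'b := j'.isLt
  have hmb := m.isLt
  have hm'b := m'.isLt
  simp only [Huckel, Matrix.transpose_apply, Matrix.of_apply, Fin.ext_iff, Nat.even_iff]
  split_ifs <;>
    try first
      | rfl
      | simp
      | (exfalso;
         (try simp only [false_or, or_false, false_and, and_false, true_and, and_true] at *);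
         all_goals omega)
  all_goals (exfalso; omega)

/-- The key computation: with vanishing parameter `y`, the determinant of the Hückel
matrix is `x^(n+1)`. -/
lemma det_Huckel_x (R : Type*) [CommRing R] (n : ℕ) (x : R) :
    (Huckel R n (fun _ => x) (fun _ => 0)).det = x ^ (n+1) := by
  set σ₀ : Equiv.Perm (TriIdx n) :=
    (Equiv.sigmaCongrRight (fun m : Fin (n+1) => finRotate (2*m.val+1))) with hσ₀
  have hperm := Matrix.det_permute' σ₀ (Huckel R n (fun _ => x) (fun _ => 0))
  rw [hσ₀, sign_rot n] at hperm
  rw [show ((1 : ℤˣ) : ℤ) = ((1:ℤ) : ℤ) from rfl] at hperm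
  push_cast at hperm
  rw [one_mul] at hperm
  rw [← hperm]
  -- the column-rotated matrix is triangular for the following weight function
  have htri := tri_det_eq_prod_diag
    ((Huckel R n (fun _ => x) (fun _ => 0)).submatrix id σ₀)
    (fun p : TriIdx n => toLex ((p.2.val % 2 : ℕ), toLex ((p.2.val : ℕ), n - p.1.val)))
    ?_
  · rw [htri]
    -- now compute the product of the diagonal entries
    rw [← Finset.univ_sigma_univ, Finset.prod_sigma]
    have hrow : ∀ m : Fin (n+1),
        (∏ j : Fin (2*m.val+1), ((Huckel R n (fun _ => x) (fun _ => 0)).submatrix id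
          σ₀) ⟨m, j⟩ ⟨m, j⟩) = x := by
      intro m
      rw [Finset.prod_eq_single_of_mem (Fin.last (2*m.val)) (Finset.mem_univ _)]
      · show Huckel R n (fun _ => x) (fun _ => 0)
          ⟨m, Fin.last (2*m.val)⟩ ⟨m, finRotate (2*m.val+1) (Fin.last (2*m.val))⟩ = x
        rw [finRotate_last]
        have hz : ((0 : Fin (2*m.val+1))).val = 0 := rfl
        have hlast : (Fin.last (2*m.val)).val = 2*m.val := rfl
        have hmb := m.isLt
        simp only [Huckel, Matrix.of_apply, Fin.ext_iff, Nat.even_iff, Fin.val_last,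
          Fin.val_zero, eq_self_iff_true, true_and, and_true, false_and, and_false,
          false_or, or_false, true_or, or_true]
        split_ifs <;>
          try first
            | rfl
            | (rw [add_zero])
            | (exfalso;
               (try simp only [false_or, or_false, false_and, and_false, true_and,
                  and_true] at *);
               all_goals omega)
        all_goals (exfalso; omega)
      · intro b _ hb
        show Huckel R n (fun _ => x) (fun _ => 0)
          ⟨m, b⟩ ⟨m, finRotate (2*m.val+1) b⟩ = 1
        have hbv : (finRotate (2*m.val+1) b).val = b.val + 1 := coe_finRotate_of_ne_last hb
        have hblt : b.val < 2*m.val := by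
          have h1 := Fin.val_ne_iff.mpr hb
          have h2 := b.isLt
          simp only [Fin.val_last] at h1
          omega
        simp only [Huckel, Matrix.of_apply, Fin.ext_iff, Nat.even_iff, eq_self_iff_true,
          true_and, and_true, false_and, and_false, false_or, or_false, true_or, or_true]
        split_ifs <;>
          try first
            | rfl
            | (exfalso;
               (try simp only [false_or, or_false, false_and, and_false, true_and,
                  and_true] at *);
               all_goals omega)
        all_goals (exfalso; omega)
    calc (∏ m : Fin (n+1), ∏ j : Fin (2*m.val+1),
            ((Huckel R n (fun _ => x) (fun _ => 0)).submatrix id σ₀) ⟨m, j⟩ ⟨m, j⟩)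
        = ∏ _m : Fin (n+1), x := Finset.prod_congr rfl fun m _ => hrow m
      _ = x ^ (n+1) := by rw [Finset.prod_const, Finset.card_univ, Fintype.card_fin]
  · -- triangularity
    rintro ⟨m, j⟩ ⟨m', j'⟩ hik hf
    simp only [Prod.Lex.le_iff, ofLex_toLex] at hf
    have hne : ¬(m.val = m'.val ∧ j.val = j'.val) := by
      rintro ⟨h1, h2⟩
      apply hik
      have hm : m = m' := Fin.ext h1
      subst hm
      exact congrArg (Sigma.mk m) (Fin.ext h2)
    have hjb := j.isLt
    have hj'b := j'.isLt
    have hmb := m.isLt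
    have hm'b := m'.isLt
    set t := finRotate (2*m'.val+1) j' with htdef
    have hd : ((t:ℕ) = j'.val + 1 ∧ j'.val < 2*m'.val) ∨
        ((t:ℕ) = 0 ∧ j'.val = 2*m'.val) := by
      rcases eq_or_ne j' (Fin.last (2*m'.val)) with hl | hl
      · right
        constructor
        · rw [htdef, hl, finRotate_last]; rfl
        · rw [hl]; rfl
      · left
        constructor
        · exact coe_finRotate_of_ne_last hl
        · have := Fin.val_ne_iff.mpr hl
          simp only [Fin.val_last] at this
          omega
    have htb := t.isLt
    show Huckel R n (fun _ => x) (fun _ => 0) ⟨m, j⟩ ⟨m', t⟩ = 0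
    simp only [Huckel, Matrix.of_apply]
    split_ifs with h1 h2 h3 h4 h5 h6 <;>
      first
        | rfl
        | (exfalso; simp only [Fin.ext_iff, Nat.even_iff] at *; omega)

theorem det_Huckel_y_zero (R : Type*) [CommRing R] (n : ℕ) (x : R) :
    (Huckel R n (fun _ => x) (fun _ => 0)).det = x ^ (n+1) ∧
    (Huckel R n (fun _ => 0) (fun _ => x)).det = x ^ (n+1) := by
  refine ⟨det_Huckel_x R n x, ?_⟩
  rw [huckel_tr, Matrix.det_transpose]
  exact det_Huckel_x R n x
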